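/- A coalgebra for the powerset functor (i.e. a directed graph c : C → P(C)) is well-founded in the categorical sense (has no proper cartesian subcoalgebra) if and only if the graph has no infinite path x_0 → x_1 → x_2 → ⋯. -/
import Mathlib


/-- A coalgebra for the powerset functor, i.e. a directed graph
`c : C → P(C)` (with edge `x → y` iff `y ∈ c x`), is well-founded in the
categorical sense — every cartesian subcoalgebra, i.e. every `S ⊆ C` with
`x ∈ S ⟺ c x ⊆ S` for all `x`, equals `C` — if and only if the graph has no
infinite path `x₀ → x₁ → x₂ → ⋯`. -/
theorem stmt_10 {C : Type*} (c : C → Set C) :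
    (∀ S : Set C, (∀ x, x ∈ S ↔ c x ⊆ S) → S = Set.univ) ↔
      ¬ ∃ x : ℕ → C, ∀ n, x (n + 1) ∈ c (x n) := by
  constructor
  · intro h ⟨x, hx⟩
    set S : Set C := {y | ¬ ∃ f : ℕ → C, f 0 = y ∧ ∀ n, f (n + 1) ∈ c (f n)} with hS
    have hcart : ∀ z, z ∈ S ↔ c z ⊆ S := by
      intro z
      constructor
      · intro hz y hy ⟨f, hf0, hf⟩
        exact hz ⟨fun n => Nat.rec z (fun k _ => f k) n, rfl, by
          intro n
          cases n with
          | zero => simpa [hf0] using hy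
          | succ m => exact hf m⟩
      · intro hsub ⟨f, hf0, hf⟩
        exact hsub (hf0 ▸ hf 0) ⟨fun n => f (n + 1), rfl, fun n => hf (n + 1)⟩
    have := h S hcart
    have hx0 : x 0 ∈ S := this ▸ Set.mem_univ _
    exact hx0 ⟨x, rfl, hx⟩
  · intro h S hcart
    by_contra hne
    have : ∃ z, z ∉ S := by
      by_contra h'
      push_neg at h'
      exact hne (Set.eq_univ_of_forall h')
    obtain ⟨z, hz⟩ := this
    have step : ∀ w : {y // y ∉ S}, ∃ w' : {y // y ∉ S}, (w' : C) ∈ c w := by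
      intro ⟨w, hw⟩
      have : ¬ c w ⊆ S := fun hs => hw ((hcart w).mpr hs)
      obtain ⟨y, hy, hyS⟩ := Set.not_subset.mp this
      exact ⟨⟨y, hyS⟩, hy⟩
    choose g hg using step
    refine h ⟨fun n => (g^[n] ⟨z, hz⟩ : {y // y ∉ S}), fun n => ?_⟩
    simp only [Function.iterate_succ_apply']
    exact hg _
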